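/- Let G be a Tanner graph with a rooted tree decomposition, and let t be an introduce node with single child t' introducing a variable node v, i.e. B_t = B_{t'} ∪ {v} with v ∈ L and v ∉ B_{t'}. Let R' ⊆ B_t^c and Q ⊆ B_t^v with v ∈ Q. Then: (i) the singleton {v} is a trapping set with parameters (R',Q) in G_t if and only if Q = {v} and R' = N_{G_t}(v); (ii) a set S with v ∈ S and |S| ≥ 2 is a trapping set with parameters (R',Q) in G_t if and only if S \ {v} is a trapping set with parameters (R' ⊕ N_{G_t}(v), Q \ {v}) in G_{t'}. -/

import Mathlib

/-- A Tanner graph: a bipartite graph on vertex set `V` partitioned into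
variable nodes `L` and check nodes `R`, every edge joining `L` and `R`. -/
structure TannerGraph (V : Type*) where
  G : SimpleGraph V
  L : Set V
  R : Set V
  disj : Disjoint L R
  cover : L ∪ R = Set.univ
  bipartite : ∀ ⦃u v⦄, G.Adj u v → (u ∈ L ∧ v ∈ R) ∨ (u ∈ R ∧ v ∈ L)

/-- `Γ_o(G[S])`: check nodes having an odd number of neighbours in `S`. -/
def TannerGraph.Gamma {V : Type*} (TG : TannerGraph V) (S : Set V) : Set V :=
  {c | c ∈ TG.R ∧ Odd ((TG.G.neighborSet c ∩ S).ncard)}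

/-- A rooted tree decomposition of the graph `G`: `T` is a finite tree with
root `root` and bags `B i ⊆ V` covering all vertices and edges, such that for
every vertex the set of bags containing it induces a connected subgraph of `T`. -/
structure IsRootedTreeDecomp {V ι : Type*} (G : SimpleGraph V)
    (T : SimpleGraph ι) (root : ι) (B : ι → Set V) : Prop where
  isTree : T.IsTree
  covers : ∀ v, ∃ i, v ∈ B i
  coversEdge : ∀ ⦃u v⦄, G.Adj u v → ∃ i, u ∈ B i ∧ v ∈ B i
  connBags : ∀ v, (T.induce {i | v ∈ B i}).Connected

/-- `Desc T root t i`: `i` is a descendant of `t` in the tree `T` rooted at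
`root`, i.e. `t` lies on a path from the root to `i` (`t` itself included). -/
def Desc {ι : Type*} (T : SimpleGraph ι) (root : ι) (t i : ι) : Prop :=
  ∃ p : T.Walk root i, p.IsPath ∧ t ∈ p.support

/-- `IsChildOf T root s t`: `s` is a child of `t` in the rooted tree. -/
def IsChildOf {ι : Type*} (T : SimpleGraph ι) (root : ι) (s t : ι) : Prop :=
  T.Adj t s ∧ Desc T root t s

/-- `∪_{i ∈ T_t} B_i`: union of the bags over all descendants of `t`;
this is the vertex set of the induced subgraph `G_t`. -/
def subVerts {V ι : Type*} (T : SimpleGraph ι) (root : ι) (B : ι → Set V)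
    (t : ι) : Set V :=
  {v | ∃ i, Desc T root t i ∧ v ∈ B i}

/-- `Γ_o(G_t[S])`, where `W` is the vertex set of `G_t`: check nodes of `G_t`
having an odd number of `G_t`-neighbours in `S`. -/
def GammaLoc {V : Type*} (TG : TannerGraph V) (W S : Set V) : Set V :=
  {c | c ∈ TG.R ∧ c ∈ W ∧ Odd ((TG.G.neighborSet c ∩ W ∩ S).ncard)}

/-- `S` is a trapping set with parameters `(R', Q)` in `G_t`, where `W` is the
vertex set of `G_t` and `Bt` is the bag at `t`. -/
def HasParams {V : Type*} (TG : TannerGraph V) (W Bt S R' Q : Set V) : Prop :=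
  S.Nonempty ∧ S ⊆ W ∩ TG.L ∧ S ∩ (Bt ∩ TG.L) = Q ∧ GammaLoc TG W S = R'

/-- `S` is a trapping set with extended parameters `(I, Q, d)` in `G_t`. -/
def HasExtParams {V : Type*} (TG : TannerGraph V) (W Bt S I Q : Set V)
    (d : ℕ) : Prop :=
  S.Nonempty ∧ S ⊆ W ∩ TG.L ∧ S ∩ (Bt ∩ TG.L) = Q ∧
    GammaLoc TG W S ∩ (Bt ∩ TG.R) = I ∧ (GammaLoc TG W S \ (Bt ∩ TG.R)).ncard = d

/-- `Γ_o(G_t[Q ∪ B_t^c]) = {c ∈ B_t^c : |N_{G_t}(c) ∩ Q| is odd}`. -/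
def GammaBag {V : Type*} (TG : TannerGraph V) (W Bt Q : Set V) : Set V :=
  {c | c ∈ Bt ∩ TG.R ∧ Odd ((TG.G.neighborSet c ∩ W ∩ Q).ncard)}

section Aux

open SimpleGraph Walk

variable {ι : Type*} [DecidableEq ι] {T : SimpleGraph ι} {root : ι}

lemma desc_self (hT : T.IsTree) (x : ι) : Desc T root x x := by
  obtain ⟨w⟩ := hT.isConnected.preconnected root x
  exact ⟨w.bypass, w.bypass_isPath, w.bypass.end_mem_support⟩

lemma desc_trans (hT : T.IsTree) {t s i : ι} (h1 : Desc T root t s)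
    (h2 : Desc T root s i) : Desc T root t i := by
  obtain ⟨p, hp, hts⟩ := h1
  obtain ⟨q, hq, hsi⟩ := h2
  refine ⟨q, hq, q.support_takeUntil_subset hsi ?_⟩
  have h : q.takeUntil s hsi = p :=
    (hT.existsUnique_path root s).unique (hq.takeUntil hsi) hp
  rw [h]; exact hts

lemma mem_dropUntil_of (hT : T.IsTree) {a b x y : ι} {p : T.Walk a b} (hp : p.IsPath)
    (hx : x ∈ p.support) (hy : y ∈ p.support) (hxy : x ≠ y)
    (hxty : x ∈ (p.takeUntil y hy).support) : y ∈ (p.dropUntil x hx).support := by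
  by_contra hcon
  have hmem : y ∈ (p.takeUntil x hx).support := by
    have h := hy
    rw [← p.take_spec hx, Walk.mem_support_append_iff] at h
    exact h.resolve_right hcon
  set q := p.takeUntil x hx with hqdef
  have hqp : q.IsPath := hp.takeUntil hx
  have huniq : q.takeUntil y hmem = p.takeUntil y hy :=
    (hT.existsUnique_path a y).unique (hqp.takeUntil hmem) (hp.takeUntil hy)
  have hxq : x ∈ (q.takeUntil y hmem).support := by rw [huniq]; exact hxty
  have hnd : q.support.Nodup := hqp.support_nodup
  rw [← q.take_spec hmem, Walk.support_append, List.nodup_append] at hnd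
  have hxtail : x ∈ (q.dropUntil y hmem).support.tail := by
    have hxs : x ∈ (q.dropUntil y hmem).support := (q.dropUntil y hmem).end_mem_support
    rw [(q.dropUntil y hmem).support_eq_cons] at hxs
    rcases List.mem_cons.mp hxs with h | h
    · exact absurd h hxy
    · exact h
  exact hnd.2.2 x hxq x hxtail rfl

lemma child_mem_support (hT : T.IsTree) {t t' : ι} (hchild : IsChildOf T root t' t)
    (honly : ∀ s, IsChildOf T root s t → s = t') {i : ι} (p : T.Walk root i)
    (hp : p.IsPath) (ht : t ∈ p.support) (hne : i ≠ t) : t' ∈ p.support := by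
  obtain ⟨s, hadj, q', hcons⟩ :=
    Walk.exists_eq_cons_of_ne (fun h => hne h.symm) (p.dropUntil t ht)
  have hnd : p.support.Nodup := hp.support_nodup
  rw [← p.take_spec ht, Walk.support_append, List.nodup_append] at hnd
  have hs_tail : s ∈ (p.dropUntil t ht).support.tail := by
    rw [hcons, Walk.support_cons, List.tail_cons]
    exact q'.start_mem_support
  have hs_not : s ∉ (p.takeUntil t ht).support := fun hmem => hnd.2.2 s hmem s hs_tail rfl
  have hw : ((p.takeUntil t ht).concat hadj).IsPath := by
    rw [← Walk.isPath_reverse_iff, Walk.reverse_concat]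
    apply Walk.IsPath.cons (hp.takeUntil ht).reverse
    rw [Walk.support_reverse, List.mem_reverse]
    exact hs_not
  have hdesc_s : Desc T root t s :=
    ⟨(p.takeUntil t ht).concat hadj, hw, by
      rw [Walk.support_concat, List.mem_append]
      exact Or.inl (p.takeUntil t ht).end_mem_support⟩
  have hst' : s = t' := honly s ⟨hadj, hdesc_s⟩
  subst hst'
  apply p.support_dropUntil_subset ht
  rw [hcons, Walk.support_cons]
  exact List.mem_cons.mpr (Or.inr q'.start_mem_support)

lemma v_not_mem_subVerts (hT : T.IsTree) {V : Type*} {B : ι → Set V}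
    (hconn : ∀ v, (T.induce {i | v ∈ B i}).Connected)
    {t t' : ι} (hchild : IsChildOf T root t' t)
    {v : V} (hvB : v ∉ B t') (hvBt : v ∈ B t) : v ∉ subVerts T root B t' := by
  rintro ⟨i, ⟨p, hp, ht'⟩, hvBi⟩
  obtain ⟨q, hq, htq⟩ := hchild.2
  have hqe : q = p.takeUntil t' ht' :=
    (hT.existsUnique_path root t').unique hq (hp.takeUntil ht')
  have htp : t ∈ (p.takeUntil t' ht').support := hqe ▸ htq
  have ht : t ∈ p.support := p.support_takeUntil_subset ht' htp
  have hne : t ≠ t' := (hchild.1).ne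
  have ht'drop : t' ∈ (p.dropUntil t ht).support :=
    mem_dropUntil_of hT hp ht ht' hne htp
  obtain ⟨w0⟩ := (hconn v).preconnected ⟨t, hvBt⟩ ⟨i, hvBi⟩
  let w : T.Walk t i := w0.map (SimpleGraph.Embedding.induce {j | v ∈ B j}).toHom
  have hwsupp : ∀ x ∈ w.support, v ∈ B x := by
    intro x hx
    replace hx : x ∈ (w0.map (SimpleGraph.Embedding.induce {j | v ∈ B j}).toHom).support := hx
    rw [Walk.support_map, List.mem_map] at hx
    obtain ⟨y, _, rfl⟩ := hx
    exact y.2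
  have heqw : w.bypass = p.dropUntil t ht :=
    (hT.existsUnique_path t i).unique w.bypass_isPath (hp.dropUntil ht)
  have ht'w : t' ∈ w.bypass.support := heqw ▸ ht'drop
  exact hvB (hwsupp t' (w.support_bypass_subset ht'w))

lemma subVerts_insert (hT : T.IsTree) {V : Type*} {B : ι → Set V} {t t' : ι}
    (hchild : IsChildOf T root t' t) (honly : ∀ s, IsChildOf T root s t → s = t')
    {v : V} (hBt : B t = B t' ∪ {v}) :
    subVerts T root B t = insert v (subVerts T root B t') := by
  ext w
  constructor
  · rintro ⟨i, ⟨p, hp, ht⟩, hBi⟩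
    by_cases hit : i = t
    · subst hit
      rw [hBt] at hBi
      rcases hBi with h | h
      · exact Set.mem_insert_of_mem _ ⟨t', desc_self hT t', h⟩
      · rw [h]; exact Set.mem_insert _ _
    · have ht'p : t' ∈ p.support := child_mem_support hT hchild honly p hp ht hit
      exact Set.mem_insert_of_mem _ ⟨i, ⟨p, hp, ht'p⟩, hBi⟩
  · intro hw
    rcases Set.mem_insert_iff.mp hw with rfl | ⟨i, hdesc, hBi⟩
    · exact ⟨t, desc_self hT t, by rw [hBt]; exact Or.inr rfl⟩
    · exact ⟨i, desc_trans hT hchild.2 hdesc, hBi⟩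

end Aux

/-- introduce-variable-node rule, case `v ∈ Q`. -/
theorem stmt_10 {V ι : Type*} [Fintype V] [Fintype ι]
    (TG : TannerGraph V) (T : SimpleGraph ι) (root : ι) (B : ι → Set V)
    (hD : IsRootedTreeDecomp TG.G T root B)
    (t t' : ι) (hchild : IsChildOf T root t' t)
    (honly : ∀ s, IsChildOf T root s t → s = t')
    (v : V) (hvL : v ∈ TG.L) (hvB : v ∉ B t') (hBt : B t = B t' ∪ {v})
    (R' Q : Set V) (hR' : R' ⊆ B t ∩ TG.R) (hQ : Q ⊆ B t ∩ TG.L) (hvQ : v ∈ Q) :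
    (HasParams TG (subVerts T root B t) (B t) {v} R' Q ↔
      (Q = {v} ∧ R' = TG.G.neighborSet v ∩ subVerts T root B t)) ∧
    (∀ S : Set V, v ∈ S → 2 ≤ S.ncard →
      (HasParams TG (subVerts T root B t) (B t) S R' Q ↔
        HasParams TG (subVerts T root B t') (B t') (S \ {v})
          (symmDiff R' (TG.G.neighborSet v ∩ subVerts T root B t)) (Q \ {v}))) := by
  classical
  have hT := hD.isTree
  have hvBt : v ∈ B t := by rw [hBt]; exact Or.inr rfl
  have hvW' : v ∉ subVerts T root B t' :=
    v_not_mem_subVerts hT hD.connBags hchild hvB hvBt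
  have hW : subVerts T root B t = insert v (subVerts T root B t') :=
    subVerts_insert hT hchild honly hBt
  have hvWt : v ∈ subVerts T root B t := ⟨t, desc_self hT t, hvBt⟩
  have hvR : v ∉ TG.R := fun h => Set.disjoint_left.mp TG.disj hvL h
  have NvR : TG.G.neighborSet v ⊆ TG.R := by
    intro c hc
    rcases TG.bipartite ((SimpleGraph.mem_neighborSet _ _ _).mp hc) with ⟨_, h⟩ | ⟨h, _⟩
    · exact h
    · exact absurd h hvR
  -- the local Γ of the singleton {v}
  have hGammaV : GammaLoc TG (subVerts T root B t) {v}
      = TG.G.neighborSet v ∩ subVerts T root B t := by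
    ext c
    constructor
    · rintro ⟨hcR, hcW, hodd⟩
      have hne : (TG.G.neighborSet c ∩ subVerts T root B t ∩ {v}).Nonempty :=
        Set.nonempty_of_ncard_ne_zero (by rintro h0; rw [h0] at hodd; simp at hodd)
      obtain ⟨x, ⟨hxN, _⟩, hxv⟩ := hne
      rw [Set.mem_singleton_iff] at hxv
      subst hxv
      exact ⟨((SimpleGraph.mem_neighborSet _ _ _).mp hxN).symm, hcW⟩
    · rintro ⟨hcN, hcW⟩
      have hAdj : TG.G.Adj c v := ((SimpleGraph.mem_neighborSet _ _ _).mp hcN).symm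
      refine ⟨NvR hcN, hcW, ?_⟩
      have hset : TG.G.neighborSet c ∩ subVerts T root B t ∩ {v} = {v} := by
        apply Set.inter_eq_right.mpr
        intro x hx
        rw [Set.mem_singleton_iff] at hx
        subst hx
        exact ⟨hAdj, hvWt⟩
      rw [hset, Set.ncard_singleton]
      exact odd_one
  -- the symmetric difference relation between the two local Γ's
  have hGamma : ∀ S : Set V, v ∈ S →
      GammaLoc TG (subVerts T root B t') (S \ {v}) =
        symmDiff (GammaLoc TG (subVerts T root B t) S)
          (TG.G.neighborSet v ∩ subVerts T root B t) := by
    intro S hvS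
    ext c
    simp only [GammaLoc, Set.mem_setOf_eq, Set.mem_symmDiff]
    by_cases hcR : c ∈ TG.R
    · by_cases hcW' : c ∈ subVerts T root B t'
      · have hcW : c ∈ subVerts T root B t := by
          rw [hW]; exact Set.mem_insert_of_mem _ hcW'
        have hNv : c ∈ TG.G.neighborSet v ∩ subVerts T root B t ↔ TG.G.Adj c v :=
          ⟨fun h => ((SimpleGraph.mem_neighborSet _ _ _).mp h.1).symm,
           fun h => ⟨(SimpleGraph.mem_neighborSet _ _ _).mpr h.symm, hcW⟩⟩
        have hvA : v ∉ TG.G.neighborSet c ∩ subVerts T root B t' ∩ (S \ {v}) := by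
          rintro ⟨-, hv⟩
          exact hv.2 rfl
        by_cases hAdj : TG.G.Adj c v
        · have hset : TG.G.neighborSet c ∩ subVerts T root B t ∩ S =
              insert v (TG.G.neighborSet c ∩ subVerts T root B t' ∩ (S \ {v})) := by
            ext x
            simp only [Set.mem_insert_iff, Set.mem_inter_iff, Set.mem_diff,
              Set.mem_singleton_iff, SimpleGraph.mem_neighborSet]
            constructor
            · rintro ⟨⟨hxN, hxW⟩, hxS⟩
              by_cases hxv : x = v
              · exact Or.inl hxv
              · rw [hW] at hxW
                rcases Set.mem_insert_iff.mp hxW with h | h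
                · exact absurd h hxv
                · exact Or.inr ⟨⟨hxN, h⟩, hxS, hxv⟩
            · rintro (rfl | ⟨⟨hxN, hxW'⟩, hxS, hxv⟩)
              · exact ⟨⟨hAdj, hvWt⟩, hvS⟩
              · exact ⟨⟨hxN, by rw [hW]; exact Set.mem_insert_of_mem _ hxW'⟩, hxS⟩
          rw [hset, Set.ncard_insert_of_notMem hvA (Set.toFinite _), Nat.odd_add_one]
          simp only [hNv]
          tauto
        · have hset : TG.G.neighborSet c ∩ subVerts T root B t ∩ S =
              TG.G.neighborSet c ∩ subVerts T root B t' ∩ (S \ {v}) := by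
            ext x
            simp only [Set.mem_inter_iff, Set.mem_diff, Set.mem_singleton_iff,
              SimpleGraph.mem_neighborSet]
            constructor
            · rintro ⟨⟨hxN, hxW⟩, hxS⟩
              have hxv : x ≠ v := fun h => hAdj (h ▸ hxN)
              rw [hW] at hxW
              rcases Set.mem_insert_iff.mp hxW with h | h
              · exact absurd h hxv
              · exact ⟨⟨hxN, h⟩, hxS, hxv⟩
            · rintro ⟨⟨hxN, hxW'⟩, hxS, -⟩
              exact ⟨⟨hxN, by rw [hW]; exact Set.mem_insert_of_mem _ hxW'⟩, hxS⟩
          rw [hset]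
          simp only [hNv]
          tauto
      · have hcv : c ≠ v := fun h => hvR (h ▸ hcR)
        have hcW : c ∉ subVerts T root B t := by
          rw [hW]
          rintro (h | h)
          · exact hcv h
          · exact hcW' h
        have hNv : c ∉ TG.G.neighborSet v ∩ subVerts T root B t := fun h => hcW h.2
        tauto
    · have hNv : c ∉ TG.G.neighborSet v ∩ subVerts T root B t := fun h => hcR (NvR h.1)
      tauto
  constructor
  · -- part (i)
    constructor
    · rintro ⟨-, -, h3, h4⟩
      refine ⟨?_, ?_⟩
      · rw [← h3]
        have hsub : ({v} : Set V) ⊆ B t ∩ TG.L :=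
          Set.singleton_subset_iff.mpr ⟨hvBt, hvL⟩
        exact Set.inter_eq_left.mpr hsub
      · rw [← h4, hGammaV]
    · rintro ⟨hQv, hR'v⟩
      refine ⟨Set.singleton_nonempty v, ?_, ?_, ?_⟩
      · exact Set.singleton_subset_iff.mpr ⟨hvWt, hvL⟩
      · rw [hQv]
        have hsub : ({v} : Set V) ⊆ B t ∩ TG.L :=
          Set.singleton_subset_iff.mpr ⟨hvBt, hvL⟩
        exact Set.inter_eq_left.mpr hsub
      · rw [hGammaV, hR'v]
  · -- part (ii)
    intro S hvS hS2
    have hSfin : S.Finite := S.toFinite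
    have hSv_ne : (S \ {v}).Nonempty := by
      apply Set.nonempty_of_ncard_ne_zero
      rw [Set.ncard_diff_singleton_of_mem hvS]
      omega
    constructor
    · rintro ⟨h1, h2, h3, h4⟩
      refine ⟨hSv_ne, ?_, ?_, ?_⟩
      · rintro x ⟨hxS, hxv⟩
        rw [Set.mem_singleton_iff] at hxv
        obtain ⟨hxW, hxL⟩ := h2 hxS
        rw [hW] at hxW
        rcases Set.mem_insert_iff.mp hxW with h | h
        · exact absurd h hxv
        · exact ⟨h, hxL⟩
      · ext x
        simp only [Set.mem_inter_iff, Set.mem_diff, Set.mem_singleton_iff]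
        constructor
        · rintro ⟨⟨hxS, hxv⟩, hxB', hxL⟩
          refine ⟨?_, hxv⟩
          rw [← h3]
          exact ⟨hxS, by rw [hBt]; exact Or.inl hxB', hxL⟩
        · rintro ⟨hxQ, hxv⟩
          rw [← h3] at hxQ
          obtain ⟨hxS, hxB, hxL⟩ := hxQ
          rw [hBt] at hxB
          rcases hxB with h | h
          · exact ⟨⟨hxS, hxv⟩, h, hxL⟩
          · exact absurd h hxv
      · rw [← h4]
        exact hGamma S hvS
    · rintro ⟨h1, h2, h3, h4⟩
      refine ⟨⟨v, hvS⟩, ?_, ?_, ?_⟩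
      · intro x hxS
        by_cases hxv : x = v
        · subst hxv; exact ⟨hvWt, hvL⟩
        · obtain ⟨hxW', hxL⟩ := h2 ⟨hxS, hxv⟩
          exact ⟨by rw [hW]; exact Set.mem_insert_of_mem _ hxW', hxL⟩
      · ext x
        simp only [Set.mem_inter_iff]
        constructor
        · rintro ⟨hxS, hxB, hxL⟩
          by_cases hxv : x = v
          · subst hxv; exact hvQ
          · rw [hBt] at hxB
            rcases hxB with h | h
            · have : x ∈ Q \ {v} := by
                rw [← h3]
                exact ⟨⟨hxS, hxv⟩, h, hxL⟩
              exact this.1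
            · exact absurd h hxv
        · intro hxQ
          by_cases hxv : x = v
          · subst hxv; exact ⟨hvS, hvBt, hvL⟩
          · have hx : x ∈ (S \ {v}) ∩ (B t' ∩ TG.L) := by
              rw [h3]; exact ⟨hxQ, hxv⟩
            obtain ⟨⟨hxS, -⟩, hxB', hxL⟩ := hx
            exact ⟨hxS, by rw [hBt]; exact Or.inl hxB', hxL⟩
      · have hkey := hGamma S hvS
        rw [h4] at hkey
        calc GammaLoc TG (subVerts T root B t) S
            = symmDiff (symmDiff (GammaLoc TG (subVerts T root B t) S)
                (TG.G.neighborSet v ∩ subVerts T root B t))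
                (TG.G.neighborSet v ∩ subVerts T root B t) :=
              (symmDiff_symmDiff_cancel_right _ _).symm
          _ = symmDiff (symmDiff R' (TG.G.neighborSet v ∩ subVerts T root B t))
                (TG.G.neighborSet v ∩ subVerts T root B t) := by rw [← hkey]
          _ = R' := symmDiff_symmDiff_cancel_right _ _
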